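/- (Theorem 3.) Every multi-delimiter code is complete: for any integers 0 < m_1 < … < m_t, the Kraft sum of the code D_{m_1,…,m_t} equals 1, i.e. the series ∑_{w ∈ D_{m_1,…,m_t}} 2^{−|w|} converges and its sum is exactly 1. Equivalently, ∑_{n=1}^∞ f_n 2^{−n} = 1, where f_n is the number of codewords of D_{m_1,…,m_t} of length n. -/

import Mathlib

/-- The word `1^mi 0`. -/
def shortWord (mi : ℕ) : List Bool := List.replicate mi true ++ [false]

/-- The delimiter `0 1^mi 0`. -/
def delim (mi : ℕ) : List Bool := false :: (List.replicate mi true ++ [false])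

/-- The multi-delimiter code `D_{m_1,…,m_t}`. -/
def MultiDelim {t : ℕ} (m : Fin t → ℕ) : Set (List Bool) :=
  {w | (∃ i, w = shortWord (m i)) ∨
    ((∀ i, ¬ shortWord (m i) <+: w) ∧
     (∃ i, delim (m i) <:+ w) ∧
     (∀ i u v, w = u ++ delim (m i) ++ v → v = []))}

open scoped Classical

section MD
variable {t : ℕ} (m : Fin t → ℕ)

lemma shortWord_length (k : ℕ) : (shortWord k).length = k + 1 := by simp [shortWord]
lemma delim_length (k : ℕ) : (delim k).length = k + 2 := by simp [delim]

lemma false_mem_of_delim_suffix {w : List Bool} {k : ℕ} (h : delim k <:+ w) : false ∈ w := by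
  obtain ⟨u, rfl⟩ := h
  simp [delim]

lemma shortWord_prefix_shortWord {a b : ℕ} (h : shortWord a <+: shortWord b) :
    shortWord a = shortWord b := by
  have hab : a ≤ b := by
    have := h.length_le
    simp only [shortWord_length] at this
    omega
  rcases Nat.eq_or_lt_of_le hab with rfl | hlt
  · rfl
  · exfalso
    obtain ⟨r, hr⟩ := h
    have hrep : List.replicate b true = List.replicate a true ++ List.replicate (b - a) true := by
      rw [← List.replicate_add]
      congr 1
      omega
    simp only [shortWord] at hr
    rw [hrep, List.append_assoc, List.append_assoc] at hr
    have h2 := List.append_cancel_left hr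
    obtain ⟨n, hn⟩ : ∃ n, b - a = n + 1 := ⟨b - a - 1, by omega⟩
    rw [hn, List.replicate_succ] at h2
    simp at h2

lemma prefixFree {w₁ w₂ : List Bool} (h₁ : w₁ ∈ MultiDelim m) (h₂ : w₂ ∈ MultiDelim m)
    (hp : w₁ <+: w₂) : w₁ = w₂ := by
  rcases h₂ with ⟨j, rfl⟩ | ⟨hni, ⟨j, hsuf⟩, honly⟩
  · -- w₂ short
    rcases h₁ with ⟨i, rfl⟩ | ⟨hni1, ⟨i, hsuf1⟩, _⟩
    · exact shortWord_prefix_shortWord hp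
    · -- w₁ long, prefix of shortWord (m j)
      exfalso
      have hf : false ∈ w₁ := false_mem_of_delim_suffix hsuf1
      rcases le_or_gt w₁.length (m j) with hle | hlt
      · have hpre : w₁ <+: List.replicate (m j) true := by
          apply List.prefix_of_prefix_length_le hp (by simp [shortWord])
          simpa using hle
        have := List.eq_of_mem_replicate (hpre.sublist.subset hf)
        exact Bool.false_ne_true this
      · have hlen : w₁.length = m j + 1 := by
          have := hp.length_le
          rw [shortWord_length] at this
          omega
        have : w₁ = shortWord (m j) := hp.eq_of_length (by rw [hlen, shortWord_length])
        exact hni1 j (this ▸ List.prefix_refl _)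
  · -- w₂ long
    rcases h₁ with ⟨i, rfl⟩ | ⟨_, ⟨i, hsuf1⟩, _⟩
    · exact absurd hp (hni i)
    · obtain ⟨u, rfl⟩ := hsuf1
      obtain ⟨v, rfl⟩ := hp
      have hv := honly i u v (by rw [List.append_assoc])
      simp [hv]

/-- All binary words of length `n` as a finset. -/
def allWords : ℕ → Finset (List Bool)
  | 0 => {[]}
  | n + 1 => ((allWords n).image (List.cons true)) ∪ ((allWords n).image (List.cons false))

lemma mem_allWords : ∀ n (w : List Bool), w ∈ allWords n ↔ w.length = n := by
  intro n
  induction n with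
  | zero => intro w; simp [allWords, List.length_eq_zero_iff]
  | succ n ih =>
    intro w
    simp only [allWords, Finset.mem_union, Finset.mem_image]
    constructor
    · rintro (⟨a, ha, rfl⟩ | ⟨a, ha, rfl⟩) <;> simp [(ih a).mp ha]
    · intro hw
      match w with
      | [] => simp at hw
      | b :: tail =>
        have htail : tail ∈ allWords n := (ih tail).mpr (by simpa using hw)
        cases b
        · exact Or.inr ⟨tail, htail, rfl⟩
        · exact Or.inl ⟨tail, htail, rfl⟩

lemma card_allWords (n : ℕ) : (allWords n).card = 2 ^ n := by
  induction n with
  | zero => simp [allWords]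
  | succ n ih =>
    have hdisj : Disjoint ((allWords n).image (List.cons true))
        ((allWords n).image (List.cons false)) := by
      rw [Finset.disjoint_left]
      rintro w hw hw'
      simp only [Finset.mem_image] at hw hw'
      obtain ⟨a, _, rfl⟩ := hw
      obtain ⟨b, _, hb⟩ := hw'
      simp at hb
    rw [allWords, Finset.card_union_of_disjoint hdisj,
      Finset.card_image_of_injective _ (List.cons_injective),
      Finset.card_image_of_injective _ (List.cons_injective), ih]
    ring

/-- Codewords of length at most `n`. -/
noncomputable def Fn (n : ℕ) : Finset (List Bool) :=
  (Finset.range (n + 1)).biUnion (fun k => (allWords k).filter (· ∈ MultiDelim m))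

lemma mem_Fn {n : ℕ} {w : List Bool} :
    w ∈ Fn m n ↔ w ∈ MultiDelim m ∧ w.length ≤ n := by
  simp only [Fn, Finset.mem_biUnion, Finset.mem_range, Finset.mem_filter, mem_allWords]
  constructor
  · rintro ⟨k, hk, rfl, hw⟩; exact ⟨hw, by omega⟩
  · rintro ⟨hw, hlen⟩; exact ⟨w.length, by omega, rfl, hw⟩

noncomputable def good (n : ℕ) : Finset (List Bool) :=
  (allWords n).filter (fun u => ∃ w ∈ MultiDelim m, w <+: u)

lemma filter_prefix_card {n : ℕ} {w : List Bool} (hw : w.length ≤ n) :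
    ((allWords n).filter (fun u => w <+: u)).card = 2 ^ (n - w.length) := by
  have himg : (allWords n).filter (fun u => w <+: u)
      = (allWords (n - w.length)).image (fun x => w ++ x) := by
    ext u
    simp only [Finset.mem_filter, Finset.mem_image, mem_allWords]
    constructor
    · rintro ⟨hlen, r, rfl⟩
      exact ⟨r, by simp at hlen ⊢; omega, rfl⟩
    · rintro ⟨x, hx, rfl⟩
      refine ⟨by simp; omega, x, rfl⟩
  rw [himg, Finset.card_image_of_injective _ (fun a b h => List.append_cancel_left h),
    card_allWords]

lemma card_good (n : ℕ) : (good m n).card = ∑ w ∈ Fn m n, 2 ^ (n - w.length) := by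
  have heq : good m n = (Fn m n).biUnion (fun w => (allWords n).filter (fun u => w <+: u)) := by
    ext u
    simp only [good, Finset.mem_filter, Finset.mem_biUnion, mem_Fn, mem_allWords]
    constructor
    · rintro ⟨hlen, w, hw, hpre⟩
      exact ⟨w, ⟨hw, by have := hpre.length_le; omega⟩, hlen, hpre⟩
    · rintro ⟨w, ⟨hw, _⟩, hu1, hu2⟩
      exact ⟨hu1, w, hw, hu2⟩
  rw [heq, Finset.card_biUnion]
  · apply Finset.sum_congr rfl
    intro w hw
    exact filter_prefix_card ((mem_Fn m).mp hw).2
  · intro x hx y hy hxy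
    rw [Function.onFun, Finset.disjoint_left]
    intro u hu hu'
    simp only [Finset.mem_filter] at hu hu'
    rcases le_total x.length y.length with h | h
    · exact hxy (prefixFree m ((mem_Fn m).mp hx).1 ((mem_Fn m).mp hy).1
        (List.prefix_of_prefix_length_le hu.2 hu'.2 h))
    · exact hxy (prefixFree m ((mem_Fn m).mp hy).1 ((mem_Fn m).mp hx).1
        (List.prefix_of_prefix_length_le hu'.2 hu.2 h)).symm

lemma exists_prefix_of_delim_infix {u : List Bool} (h : ∃ i, delim (m i) <:+: u) :
    ∃ w ∈ MultiDelim m, w <+: u := by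
  by_cases hshort : ∃ j, shortWord (m j) <+: u
  · obtain ⟨j, hj⟩ := hshort
    exact ⟨shortWord (m j), Or.inl ⟨j, rfl⟩, hj⟩
  · push_neg at hshort
    obtain ⟨i, s, tl, hst⟩ := h
    have hP : ∃ k, ∃ j, delim (m j) <:+ u.take k := by
      refine ⟨s.length + (delim (m i)).length, i, ?_⟩
      have : u.take (s.length + (delim (m i)).length) = s ++ delim (m i) := by
        rw [← hst, ← List.length_append, List.take_left]
      rw [this]
      exact List.suffix_append _ _
    set k := Nat.find hP with hkdef
    obtain ⟨j, hj⟩ := Nat.find_spec hP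
    have hkle : k ≤ u.length := by
      have h1 : k ≤ s.length + (delim (m i)).length := Nat.find_min' hP ⟨i, by
        have : u.take (s.length + (delim (m i)).length) = s ++ delim (m i) := by
          rw [← hst, ← List.length_append, List.take_left]
        rw [this]; exact List.suffix_append _ _⟩
      have h2 : s.length + (delim (m i)).length ≤ u.length := by
        rw [← hst]; simp [List.length_append]
      omega
    refine ⟨u.take k, Or.inr ⟨?_, ⟨j, hj⟩, ?_⟩, List.take_prefix k u⟩
    · intro j' hj'
      exact hshort j' (hj'.trans (List.take_prefix k u))
    · intro j' a b heq
      by_contra hb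
      have hbpos : 0 < b.length := List.length_pos_iff.mpr hb
      have hlenw : (u.take k).length = k := by
        rw [List.length_take]; omega
      have hlen' : k = a.length + (delim (m j')).length + b.length := by
        rw [← hlenw, heq]; simp [List.length_append]; omega
      set k' := a.length + (delim (m j')).length with hk'
      have hk'lt : k' < k := by omega
      apply Nat.find_min hP hk'lt
      refine ⟨j', ?_⟩
      have h1 : u.take k' = (u.take k).take k' := by
        rw [List.take_take]
        congr 1
        omega
      have h2 : (u.take k).take k' = a ++ delim (m j') := by
        rw [heq, hk', ← List.length_append, List.take_left]
      rw [h1, h2]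
      exact List.suffix_append _ _

lemma avoid_card (p : List Bool) (hp : 1 ≤ p.length) (q : ℕ) :
    ((allWords (q * p.length)).filter (fun u => ¬ p <:+: u)).card
      ≤ (2 ^ p.length - 1) ^ q := by
  induction q with
  | zero =>
    rw [Nat.zero_mul, pow_zero]
    exact le_trans (Finset.card_filter_le _ _) (by simp [allWords])
  | succ q ih =>
    set ℓ := p.length with hℓ
    have hsub : (allWords ((q + 1) * ℓ)).filter (fun u => ¬ p <:+: u)
        ⊆ (((allWords ℓ).erase p) ×ˢ ((allWords (q * ℓ)).filter (fun u => ¬ p <:+: u))).image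
          (fun ab : List Bool × List Bool => ab.1 ++ ab.2) := by
      intro u hu
      simp only [Finset.mem_filter, mem_allWords] at hu
      obtain ⟨hlen, havoid⟩ := hu
      have hlen' : u.length = q * ℓ + ℓ := by rw [hlen]; ring
      simp only [Finset.mem_image, Finset.mem_product, Finset.mem_erase, Finset.mem_filter,
        mem_allWords]
      refine ⟨(u.take ℓ, u.drop ℓ), ⟨⟨?_, ?_⟩, ?_, ?_⟩, List.take_append_drop ℓ u⟩
      · intro hEq
        exact havoid (hEq ▸ (List.take_prefix ℓ u).isInfix)
      · rw [List.length_take]; omega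
      · rw [List.length_drop]; omega

      · intro hinf
        exact havoid (hinf.trans (List.drop_suffix ℓ u).isInfix)
    calc ((allWords ((q + 1) * ℓ)).filter (fun u => ¬ p <:+: u)).card
        ≤ _ := Finset.card_le_card hsub
      _ ≤ (((allWords ℓ).erase p) ×ˢ ((allWords (q * ℓ)).filter (fun u => ¬ p <:+: u))).card :=
          Finset.card_image_le
      _ = ((allWords ℓ).erase p).card * ((allWords (q * ℓ)).filter (fun u => ¬ p <:+: u)).card :=
          Finset.card_product _ _
      _ ≤ (2 ^ ℓ - 1) * (2 ^ ℓ - 1) ^ q := by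
          apply Nat.mul_le_mul _ ih
          rw [Finset.card_erase_of_mem (by simp [mem_allWords, hℓ]), card_allWords]
      _ = (2 ^ ℓ - 1) ^ (q + 1) := by ring

end MD

/-- Theorem 3: every multi-delimiter code is complete: the Kraft sum
`∑_{w ∈ D_{m_1,…,m_t}} 2^{-|w|}` converges and equals `1`. -/
theorem multiDelim_complete {t : ℕ} (ht : 0 < t) (m : Fin t → ℕ)
    (hpos : ∀ i, 0 < m i) (hmono : StrictMono m) :
    HasSum (fun w : MultiDelim m => ((2 : ℝ) ^ (w : List Bool).length)⁻¹) 1 := by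
  classical
  set g : List Bool → ℝ := fun w => ((2 : ℝ) ^ w.length)⁻¹ with hg
  -- key identity : partial sums over codewords of length ≤ n
  have hkey : ∀ n : ℕ, ∑ w ∈ Fn m n, g w = ((good m n).card : ℝ) / 2 ^ n := by
    intro n
    rw [eq_div_iff (by positivity)]
    calc (∑ w ∈ Fn m n, g w) * 2 ^ n = ∑ w ∈ Fn m n, g w * 2 ^ n := by rw [Finset.sum_mul]
      _ = ∑ w ∈ Fn m n, (2 : ℝ) ^ (n - w.length) := by
          apply Finset.sum_congr rfl
          intro w hw
          rw [pow_sub₀ (2 : ℝ) two_ne_zero ((mem_Fn m).mp hw).2, hg]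
          ring
      _ = ((good m n).card : ℝ) := by rw [card_good]; push_cast; rfl
  -- upper bound : any finite partial sum is ≤ 1
  have hub : ∀ F : Finset ↥(MultiDelim m), ∑ w ∈ F, g ↑w ≤ 1 := by
    intro F
    set n := F.sup (fun w => (↑w : List Bool).length) with hn
    have h1 : ∑ w ∈ F, g ↑w = ∑ w ∈ F.image Subtype.val, g w := by
      rw [Finset.sum_image (by intro x _ y _ h; exact Subtype.ext h)]
    have hsub : F.image Subtype.val ⊆ Fn m n := by
      intro w hw
      simp only [Finset.mem_image] at hw
      obtain ⟨x, hx, rfl⟩ := hw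
      have hle := Finset.le_sup (f := fun w : ↥(MultiDelim m) => (↑w : List Bool).length) hx
      exact (mem_Fn m).mpr ⟨x.2, by rw [hn]; exact hle⟩
    have h2 : ∑ w ∈ F.image Subtype.val, g w ≤ ∑ w ∈ Fn m n, g w :=
      Finset.sum_le_sum_of_subset_of_nonneg hsub (by intro i _ _; positivity)
    have h3 : ∑ w ∈ Fn m n, g w ≤ 1 := by
      rw [hkey n, div_le_one (by positivity)]
      have hcard : (good m n).card ≤ 2 ^ n := by
        calc (good m n).card ≤ (allWords n).card := Finset.card_filter_le _ _
          _ = 2 ^ n := card_allWords n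
      calc ((good m n).card : ℝ) ≤ ((2 ^ n : ℕ) : ℝ) := by exact_mod_cast hcard
        _ = 2 ^ n := by push_cast; rfl
    calc ∑ w ∈ F, g ↑w = ∑ w ∈ F.image Subtype.val, g w := h1
      _ ≤ 1 := le_trans h2 h3
  -- lower bound
  set i0 : Fin t := ⟨0, ht⟩
  set p := delim (m i0) with hpdef
  set ℓ := p.length with hℓdef
  have hℓ : ℓ = m i0 + 2 := delim_length _
  set c : ℝ := ((2 ^ ℓ - 1 : ℕ) : ℝ) / 2 ^ ℓ with hcdef
  have hpow_pos : (0 : ℕ) < 2 ^ ℓ := Nat.pow_pos (by norm_num)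
  have hc0 : 0 ≤ c := by positivity
  have hc1 : c < 1 := by
    rw [hcdef, div_lt_one (by positivity)]
    have : (2 ^ ℓ - 1 : ℕ) < 2 ^ ℓ := by omega
    calc ((2 ^ ℓ - 1 : ℕ) : ℝ) < ((2 ^ ℓ : ℕ) : ℝ) := by exact_mod_cast this
      _ = 2 ^ ℓ := by push_cast; rfl
  have hlow : ∀ q : ℕ, 1 - c ^ q ≤ ∑ w ∈ Fn m (q * ℓ), g w := by
    intro q
    set n := q * ℓ with hndef
    -- bad words avoid having a codeword prefix, hence avoid the delimiter as infix
    have hbadsub : (allWords n).filter (fun u => ¬ ∃ w ∈ MultiDelim m, w <+: u)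
        ⊆ (allWords n).filter (fun u => ¬ p <:+: u) := by
      intro u hu
      simp only [Finset.mem_filter] at hu ⊢
      refine ⟨hu.1, fun hinf => hu.2 ?_⟩
      exact exists_prefix_of_delim_infix m ⟨i0, hinf⟩
    have hbadcard : ((allWords n).filter (fun u => ¬ ∃ w ∈ MultiDelim m, w <+: u)).card
        ≤ (2 ^ ℓ - 1) ^ q :=
      le_trans (Finset.card_le_card hbadsub) (avoid_card p (by omega) q)
    have hsplit : (good m n).card
        + ((allWords n).filter (fun u => ¬ ∃ w ∈ MultiDelim m, w <+: u)).card = 2 ^ n := by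
      rw [good, Finset.card_filter_add_card_filter_not, card_allWords]
    have hgood_ge : (2 ^ n : ℝ) - ((2 ^ ℓ - 1 : ℕ) ^ q : ℕ) ≤ ((good m n).card : ℝ) := by
      have h1 : ((good m n).card : ℝ)
          + ((allWords n).filter (fun u => ¬ ∃ w ∈ MultiDelim m, w <+: u)).card
          = ((2 ^ n : ℕ) : ℝ) := by exact_mod_cast hsplit
      have h2 : (((allWords n).filter (fun u => ¬ ∃ w ∈ MultiDelim m, w <+: u)).card : ℝ)
          ≤ (((2 ^ ℓ - 1) ^ q : ℕ) : ℝ) := by exact_mod_cast hbadcard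
      have h3 : ((2 ^ n : ℕ) : ℝ) = (2 : ℝ) ^ n := by push_cast; rfl
      linarith
    rw [hkey n, le_div_iff₀ (by positivity)]
    have hcq : c ^ q * 2 ^ n = (((2 ^ ℓ - 1) ^ q : ℕ) : ℝ) := by
      rw [hcdef, div_pow, hndef]
      have h4 : (2 : ℝ) ^ (q * ℓ) = ((2 : ℝ) ^ ℓ) ^ q := by
        rw [← pow_mul, Nat.mul_comm]
      rw [h4, div_mul_cancel₀]
      · push_cast [Nat.one_le_two_pow]; ring
      · positivity
    have : (1 - c ^ q) * 2 ^ n = 2 ^ n - c ^ q * 2 ^ n := by ring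
    rw [this, hcq]
    linarith
  -- conclude via IsLUB
  apply hasSum_of_isLUB_of_nonneg _ (fun w => by positivity)
  constructor
  · rintro x ⟨F, rfl⟩
    exact hub F
  · intro x hx
    have hmem : ∀ q : ℕ, ∑ w ∈ Fn m (q * ℓ), g w ≤ x := by
      intro q
      have hinj : Function.Injective
          (fun w : {w // w ∈ Fn m (q * ℓ)} => (⟨w.1, ((mem_Fn m).mp w.2).1⟩ : ↥(MultiDelim m))) := by
        intro a b hab
        have h := congrArg Subtype.val hab; exact Subtype.ext h
      have heq : ∑ w ∈ (Fn m (q * ℓ)).attach.map ⟨_, hinj⟩,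
          ((2 : ℝ) ^ (↑w : List Bool).length)⁻¹ = ∑ w ∈ Fn m (q * ℓ), g w := by
        rw [Finset.sum_map]
        exact Finset.sum_attach (Fn m (q * ℓ)) (fun w => ((2 : ℝ) ^ w.length)⁻¹)
      have hle := hx ⟨(Fn m (q * ℓ)).attach.map ⟨_, hinj⟩, rfl⟩
      have hle' : ∑ w ∈ (Fn m (q * ℓ)).attach.map ⟨_, hinj⟩,
          ((2 : ℝ) ^ (↑w : List Bool).length)⁻¹ ≤ x := hle
      rw [heq] at hle'
      exact hle'
    have htend : Filter.Tendsto (fun q : ℕ => 1 - c ^ q) Filter.atTop (nhds 1) := by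
      have h0 := tendsto_pow_atTop_nhds_zero_of_lt_one hc0 hc1
      have := h0.const_sub 1
      simpa using this
    exact le_of_tendsto' htend (fun q => le_trans (hlow q) (hmem q))
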